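/- Let G and H be finite groups and (φ, θ) an isoclinism from G to H. Then Pr_g(G) = Pr_{θ(g)}(H) for every g ∈ G'. -/

import Mathlib

open scoped Classical

namespace Paper

/-- The commutator `[x,y] = x⁻¹y⁻¹xy`. -/
def comm {G : Type*} [Group G] (x y : G) : G := x⁻¹ * y⁻¹ * x * y

/-- `K(G)`, the set of commutators in `G`. -/
def KG (G : Type*) [Group G] : Set G := {g : G | ∃ x y : G, comm x y = g}

/-- The fiber of `g` under the commutator word map. -/
def fiber {G : Type*} [Group G] (g : G) : Set (G × G) := {q : G × G | comm q.1 q.2 = g}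

/-- `Pr_g(G) = |fiber(g)| / |G|²`. -/
noncomputable def Pr (G : Type*) [Group G] (g : G) : ℚ :=
  (Nat.card (fiber g) : ℚ) / ((Nat.card G : ℚ)) ^ 2

/-- `P(G) = {Pr_g(G) : g ∈ K(G), g ≠ 1}`. -/
noncomputable def PSet (G : Type*) [Group G] : Set ℚ :=
  {q : ℚ | ∃ g ∈ KG G, g ≠ 1 ∧ Pr G g = q}

/-- The conjugacy class `g^G` of `g` in `G`. -/
def conjClass {G : Type*} [Group G] (g : G) : Set G := {h : G | ∃ x : G, x⁻¹ * g * x = h}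

/-- `G` is of conjugate type `(1, m)`: every noncentral element has conjugacy
class of size exactly `m`. -/
def IsConjugateType1 (G : Type*) [Group G] (m : ℕ) : Prop :=
  ∀ g : G, g ∉ Subgroup.center G → Nat.card (conjClass g) = m

/-- `TZ_g = {xZ(G) ∈ G/Z(G) : g ∈ [x,G]}`. -/
def TZ (G : Type*) [Group G] (g : G) : Set (G ⧸ Subgroup.center G) :=
  {xz : G ⧸ Subgroup.center G |
    ∃ x : G, (QuotientGroup.mk x : G ⧸ Subgroup.center G) = xz ∧ ∃ h : G, comm x h = g}


open scoped commutatorElement in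
lemma comm_mem_commutator {G : Type*} [Group G] (x y : G) : comm x y ∈ commutator G := by
  have h : comm x y = ⁅x⁻¹, y⁻¹⁆ := by
    simp only [comm, commutatorElement_def, inv_inv]
  rw [h, commutator_def]
  exact Subgroup.commutator_mem_commutator (Subgroup.mem_top _) (Subgroup.mem_top _)


lemma comm_mul_center {G : Type*} [Group G] (x y z w : G) (hz : z ∈ Subgroup.center G)
    (hw : w ∈ Subgroup.center G) :
    comm (x*z) (y*w) = comm x y := by
  have hz' := Subgroup.mem_center_iff.mp hz
  have hw' := Subgroup.mem_center_iff.mp hw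
  have pullz : ∀ a b : G, a * (z * b) = z * (a * b) := fun a b => by
    rw [← mul_assoc, hz' a, mul_assoc]
  have pullw : ∀ a b : G, a * (w * b) = w * (a * b) := fun a b => by
    rw [← mul_assoc, hw' a, mul_assoc]
  simp only [comm, mul_inv_rev, mul_assoc]
  simp only [pullz, hz', mul_inv_cancel_left, inv_mul_cancel_left]
  simp only [pullw, hw', mul_inv_cancel_left, inv_mul_cancel_left]

lemma comm_congr {G : Type*} [Group G] {x x' y y' : G}
    (hx : (QuotientGroup.mk x : G ⧸ Subgroup.center G) = QuotientGroup.mk x')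
    (hy : (QuotientGroup.mk y : G ⧸ Subgroup.center G) = QuotientGroup.mk y') :
    comm x y = comm x' y' := by
  have hz : x⁻¹ * x' ∈ Subgroup.center G := QuotientGroup.eq.mp hx
  have hw : y⁻¹ * y' ∈ Subgroup.center G := QuotientGroup.eq.mp hy
  have ex : x' = x * (x⁻¹ * x') := by group
  have ey : y' = y * (y⁻¹ * y') := by group
  rw [ex, ey, comm_mul_center _ _ _ _ hz hw]

/-- The set of pairs of central cosets whose commutator is `g`. -/
def Sset (G : Type*) [Group G] (g : G) :
    Set ((G ⧸ Subgroup.center G) × (G ⧸ Subgroup.center G)) :=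
  {p | comm (Quotient.out p.1) (Quotient.out p.2) = g}

lemma card_fiber (G : Type*) [Group G] (g : G) :
    Nat.card (fiber g) = Nat.card (Subgroup.center G) ^ 2 * Nat.card (Sset G g) := by
  have key : Nat.card ((Subgroup.center G × Subgroup.center G) × Sset G g)
      = Nat.card (fiber g) := by
    apply Nat.card_congr
    refine Equiv.ofBijective
      (fun p => ⟨(Quotient.out p.2.1.1 * p.1.1, Quotient.out p.2.1.2 * p.1.2), ?_⟩) ⟨?_, ?_⟩
    · show comm _ _ = g
      rw [comm_mul_center _ _ _ _ p.1.1.2 p.1.2.2]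
      exact p.2.2
    · rintro ⟨⟨z, w⟩, ⟨⟨a, b⟩, hab⟩⟩ ⟨⟨z', w'⟩, ⟨⟨a', b'⟩, hab'⟩⟩ h
      simp only [Subtype.mk.injEq, Prod.mk.injEq] at h
      obtain ⟨h1, h2⟩ := h
      have ha : a = a' := by
        have := congrArg (QuotientGroup.mk (s := Subgroup.center G)) h1
        simpa [QuotientGroup.mk_mul, QuotientGroup.out_eq',
          (QuotientGroup.eq_one_iff _).mpr z.2, (QuotientGroup.eq_one_iff _).mpr z'.2] using this
      have hb : b = b' := by
        have := congrArg (QuotientGroup.mk (s := Subgroup.center G)) h2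
        simpa [QuotientGroup.mk_mul, QuotientGroup.out_eq',
          (QuotientGroup.eq_one_iff _).mpr w.2, (QuotientGroup.eq_one_iff _).mpr w'.2] using this
      subst ha; subst hb
      have hz : (z : G) = z' := mul_left_cancel h1
      have hw : (w : G) = w' := mul_left_cancel h2
      simp [Prod.ext_iff, Subtype.ext_iff, hz, hw]
    · rintro ⟨⟨x, y⟩, hxy⟩
      set a : G ⧸ Subgroup.center G := QuotientGroup.mk x with ha
      set b : G ⧸ Subgroup.center G := QuotientGroup.mk y with hb
      have hma : (QuotientGroup.mk (Quotient.out a) : G ⧸ Subgroup.center G)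
          = QuotientGroup.mk x := by rw [QuotientGroup.out_eq']
      have hmb : (QuotientGroup.mk (Quotient.out b) : G ⧸ Subgroup.center G)
          = QuotientGroup.mk y := by rw [QuotientGroup.out_eq']
      have hz : (Quotient.out a)⁻¹ * x ∈ Subgroup.center G := QuotientGroup.eq.mp hma
      have hw : (Quotient.out b)⁻¹ * y ∈ Subgroup.center G := QuotientGroup.eq.mp hmb
      have hS : (a, b) ∈ Sset G g := by
        show comm _ _ = g
        rw [comm_congr hma hmb]; exact hxy
      refine ⟨⟨⟨⟨_, hz⟩, ⟨_, hw⟩⟩, ⟨(a, b), hS⟩⟩, ?_⟩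
      simp [mul_inv_cancel_left]
  rw [← key, Nat.card_prod, Nat.card_prod]
  ring

lemma Pr_eq (G : Type*) [Group G] [Finite G] (g : G) :
    Pr G g = (Nat.card (Sset G g) : ℚ) / (Nat.card (G ⧸ Subgroup.center G) : ℚ) ^ 2 := by
  have hc : (0 : ℚ) < Nat.card (Subgroup.center G) := by
    exact_mod_cast Nat.card_pos
  have hq : (0 : ℚ) < Nat.card (G ⧸ Subgroup.center G) := by
    exact_mod_cast Nat.card_pos
  rw [Pr, card_fiber, Subgroup.card_eq_card_quotient_mul_card_subgroup (Subgroup.center G)]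
  push_cast
  field_simp

theorem cardS_eq (G H : Type*) [Group G] [Group H] [Finite G] [Finite H]
    (φ : (G ⧸ Subgroup.center G) ≃* (H ⧸ Subgroup.center H))
    (θ : (commutator G) ≃* (commutator H))
    (hcompat : ∀ (x y : G) (x' y' : H),
      φ (QuotientGroup.mk x) = QuotientGroup.mk x' →
      φ (QuotientGroup.mk y) = QuotientGroup.mk y' →
      ((θ ⟨comm x y, comm_mem_commutator x y⟩ : commutator H) : H) = comm x' y')
    (g : commutator G) :
    Nat.card (Sset G (g : G)) = Nat.card (Sset H ((θ g : commutator H) : H)) := by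
  apply Nat.card_congr
  have key : ∀ (a b : G ⧸ Subgroup.center G),
      ((θ ⟨comm (Quotient.out a) (Quotient.out b), comm_mem_commutator _ _⟩ : commutator H) : H)
        = comm (Quotient.out (φ a)) (Quotient.out (φ b)) := by
    intro a b
    apply hcompat
    · rw [QuotientGroup.out_eq', QuotientGroup.out_eq']
    · rw [QuotientGroup.out_eq', QuotientGroup.out_eq']
  refine Equiv.ofBijective (fun p => ⟨(φ p.1.1, φ p.1.2), ?_⟩) ⟨?_, ?_⟩
  · show comm _ _ = _
    rw [← key]
    have : (⟨comm (Quotient.out p.1.1) (Quotient.out p.1.2), comm_mem_commutator _ _⟩ :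
        commutator G) = g := Subtype.ext p.2
    rw [this]
  · rintro ⟨⟨a, b⟩, hab⟩ ⟨⟨a', b'⟩, hab'⟩ h
    simp only [Subtype.mk.injEq, Prod.mk.injEq] at h
    simp [Prod.ext_iff, Subtype.ext_iff, φ.injective h.1, φ.injective h.2]
  · rintro ⟨⟨a', b'⟩, hab'⟩
    have h1 : φ (φ.symm a') = a' := φ.apply_symm_apply a'
    have h2 : φ (φ.symm b') = b' := φ.apply_symm_apply b'
    have hk := key (φ.symm a') (φ.symm b')
    rw [h1, h2] at hk
    have hmem : (φ.symm a', φ.symm b') ∈ Sset G (g : G) := by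
      show comm _ _ = (g : G)
      have : (θ ⟨comm (Quotient.out (φ.symm a')) (Quotient.out (φ.symm b')),
          comm_mem_commutator _ _⟩) = θ g := by
        apply Subtype.ext
        rw [hk]; exact hab'
      have := θ.injective this
      exact congrArg Subtype.val this
    exact ⟨⟨(φ.symm a', φ.symm b'), hmem⟩, by simp [Subtype.ext_iff, Prod.ext_iff, h1, h2]⟩

/-- isoclinic finite groups have the same commutator fiber
probabilities: `Pr_g(G) = Pr_{θ(g)}(H)` for all `g ∈ G'`. -/
theorem stmt3 (G H : Type*) [Group G] [Group H] [Finite G] [Finite H]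
    (φ : (G ⧸ Subgroup.center G) ≃* (H ⧸ Subgroup.center H))
    (θ : (commutator G) ≃* (commutator H))
    (hcompat : ∀ (x y : G) (x' y' : H),
      φ (QuotientGroup.mk x) = QuotientGroup.mk x' →
      φ (QuotientGroup.mk y) = QuotientGroup.mk y' →
      ((θ ⟨comm x y, comm_mem_commutator x y⟩ : commutator H) : H) = comm x' y') :
    ∀ g : commutator G, Pr G (g : G) = Pr H ((θ g : commutator H) : H) := by
  intro g
  rw [Pr_eq G, Pr_eq H, cardS_eq G H φ θ hcompat g, Nat.card_congr φ.toEquiv]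


end Paper
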